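/- Let G be a linearly ordered abelian group, H a convex subgroup of G, and p a prime. Then the index [G : pG] is infinite if and only if the index [H : pH] is infinite or the index [G : H + pG] is infinite (the latter equals the index of p(G/H) in G/H). -/

import Mathlib

/-- `nH = {n • h : h ∈ H}` as a subgroup. -/
def smulSub {G : Type*} [AddCommGroup G] (n : ℕ) (H : AddSubgroup G) : AddSubgroup G :=
  AddSubgroup.map (n • AddMonoidHom.id G) H

/-- A subgroup `H` of a linearly ordered abelian group is convex if
`0 ≤ g ≤ h` and `h ∈ H` imply `g ∈ H`. -/
def IsConvexSubgroup {G : Type*} [AddCommGroup G] [LinearOrder G] [IsOrderedAddMonoid G] (H : AddSubgroup G) : Prop :=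
  ∀ g h : G, 0 ≤ g → g ≤ h → h ∈ H → g ∈ H

lemma mem_smulSub {G : Type*} [AddCommGroup G] {n : ℕ} {H : AddSubgroup G} {x : G} :
    x ∈ smulSub n H ↔ ∃ h ∈ H, n • h = x := by
  simp [smulSub, AddSubgroup.mem_map]

lemma smulSub_inf_eq {G : Type*} [AddCommGroup G] [LinearOrder G] [IsOrderedAddMonoid G]
    (H : AddSubgroup G) (hH : IsConvexSubgroup H) (p : ℕ) (hp : 1 ≤ p) :
    smulSub p (⊤ : AddSubgroup G) ⊓ H = smulSub p H := by
  apply le_antisymm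
  · rintro x ⟨hx1, hx2⟩
    obtain ⟨g, -, rfl⟩ := mem_smulSub.mp hx1
    rcases le_total 0 g with hg | hg
    · have hle : g ≤ p • g := by
        calc g = 1 • g := (one_nsmul g).symm
        _ ≤ p • g := nsmul_le_nsmul_left hg hp
      exact mem_smulSub.mpr ⟨g, hH g (p • g) hg hle hx2, rfl⟩
    · have hg' : 0 ≤ -g := neg_nonneg.mpr hg
      have hle : -g ≤ p • (-g) := by
        calc -g = 1 • (-g) := (one_nsmul _).symm
        _ ≤ p • (-g) := nsmul_le_nsmul_left hg' hp
      have hmem : p • (-g) ∈ H := by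
        rw [smul_neg]; exact neg_mem hx2
      have : -g ∈ H := hH (-g) (p • (-g)) hg' hle hmem
      exact mem_smulSub.mpr ⟨g, by simpa using neg_mem this, rfl⟩
  · rintro x hx
    obtain ⟨h, hh, rfl⟩ := mem_smulSub.mp hx
    exact ⟨mem_smulSub.mpr ⟨h, trivial, rfl⟩, AddSubgroup.nsmul_mem H hh p⟩

/-- Let `G` be a linearly ordered abelian group, `H` a convex subgroup, `p` a prime.
Then `[G : pG]` is infinite iff `[H : pH]` is infinite or `[G : H + pG]` is infinite.
(Infinite index is expressed by `index = 0`, resp. `relindex = 0`.) -/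
theorem index_p_infinite_iff_of_convex {G : Type*} [AddCommGroup G] [LinearOrder G] [IsOrderedAddMonoid G]
    (H : AddSubgroup G) (hH : IsConvexSubgroup H) (p : ℕ) (hp : p.Prime) :
    (smulSub p (⊤ : AddSubgroup G)).index = 0 ↔
      ((smulSub p H).relIndex H = 0 ∨ (H ⊔ smulSub p (⊤ : AddSubgroup G)).index = 0) := by
  have key : (smulSub p (⊤ : AddSubgroup G)).relIndex (H ⊔ smulSub p (⊤ : AddSubgroup G)) *
      (H ⊔ smulSub p (⊤ : AddSubgroup G)).index = (smulSub p (⊤ : AddSubgroup G)).index :=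
    AddSubgroup.relIndex_mul_index le_sup_right
  have h1 : (smulSub p (⊤ : AddSubgroup G)).relIndex (H ⊔ smulSub p (⊤ : AddSubgroup G)) =
      (smulSub p H).relIndex H := by
    rw [AddSubgroup.relIndex_sup_right, ← AddSubgroup.inf_relIndex_right,
      smulSub_inf_eq H hH p hp.one_lt.le]
  rw [← key, h1, Nat.mul_eq_zero]
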